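/- Let (D1, M) be a consistent periodic first-derivative SBP operator (M symmetric positive definite, M·D1 + D1ᵀ·M = 0, D1·𝟙 = 0) and D2 a consistent periodic second-derivative SBP operator with the same mass matrix M (M·D2 = −A2, A2 symmetric positive semidefinite, D2·𝟙 = 0). Let u : ℝ → ℝ^m be differentiable and satisfy the semidiscretization of the linear dispersive equation, ∂ₜu = −(I − D2)⁻¹·D1·u, for all t. Then the discrete total mass 𝟙ᵀ·M·u(t) is constant in t. -/

import Mathlib

open Matrix

/-- The semidiscretization `∂ₜu = −(I − D2)⁻¹ D1 u` of the linear dispersive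
equation `(1 − ∂ₓ²)∂ₜu + ∂ₓu = 0`, with consistent periodic SBP operators
`D1`, `D2` sharing a symmetric positive definite mass matrix `M`, conserves
the discrete total mass `𝟙ᵀ·M·u(t)`. -/
theorem linear_dispersive_conserves_total_mass
    (m : ℕ) (D1 D2 M A2 : Matrix (Fin m) (Fin m) ℝ)
    (hM : M.PosDef)
    (hD1 : M * D1 + D1ᵀ * M = 0)
    (hD1cons : D1 *ᵥ (1 : Fin m → ℝ) = 0)
    (hA2 : A2.PosSemidef)
    (hD2 : M * D2 = -A2)
    (hD2cons : D2 *ᵥ (1 : Fin m → ℝ) = 0)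
    (u : ℝ → Fin m → ℝ)
    (hu : ∀ t, HasDerivAt u (-((1 - D2)⁻¹ *ᵥ (D1 *ᵥ u t))) t) :
    ∀ t₁ t₂ : ℝ,
      (1 : Fin m → ℝ) ⬝ᵥ (M *ᵥ u t₁) = (1 : Fin m → ℝ) ⬝ᵥ (M *ᵥ u t₂) := by
  have hMT : Mᵀ = M := hM.isHermitian.eq
  have hA2T : A2ᵀ = A2 := hA2.isHermitian.eq
  have hMA : M * (1 - D2) = M + A2 := by
    rw [mul_sub, mul_one, hD2, sub_neg_eq_add]
  have hMApos : (M + A2).PosDef := hM.add_posSemidef hA2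
  have hdet : IsUnit (1 - D2).det := by
    have h : (M * (1 - D2)).det ≠ 0 := by
      rw [hMA]; exact hMApos.det_pos.ne'
    rw [det_mul] at h
    exact isUnit_iff_ne_zero.mpr (right_ne_zero_of_mul h)
  -- symmetry relation
  have hsym : (1 - D2)ᵀ * M = M * (1 - D2) := by
    have : (M * (1 - D2))ᵀ = M * (1 - D2) := by
      rw [hMA, transpose_add, hMT, hA2T]
    calc (1 - D2)ᵀ * M = (1 - D2)ᵀ * Mᵀ := by rw [hMT]
      _ = (M * (1 - D2))ᵀ := (transpose_mul _ _).symm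
      _ = M * (1 - D2) := this
  -- M * (1-D2)⁻¹ = ((1-D2)⁻¹)ᵀ * M
  have hkeyM : M * (1 - D2)⁻¹ = ((1 - D2)⁻¹)ᵀ * M := by
    have h1 : (1 - D2)ᵀ * (M * (1 - D2)⁻¹) = M := by
      rw [← mul_assoc, hsym, mul_assoc, mul_nonsing_inv _ hdet, mul_one]
    calc M * (1 - D2)⁻¹
        = ((1 - D2)ᵀ)⁻¹ * ((1 - D2)ᵀ * (M * (1 - D2)⁻¹)) := by
          rw [← mul_assoc, nonsing_inv_mul _ (by rwa [det_transpose]), one_mul]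
      _ = ((1 - D2)⁻¹)ᵀ * M := by rw [h1, transpose_nonsing_inv]
  have hinv1 : (1 - D2)⁻¹ *ᵥ (1 : Fin m → ℝ) = 1 := by
    have h1 : (1 - D2) *ᵥ (1 : Fin m → ℝ) = 1 := by
      rw [sub_mulVec, one_mulVec, hD2cons, sub_zero]
    calc (1 - D2)⁻¹ *ᵥ (1 : Fin m → ℝ)
        = (1 - D2)⁻¹ *ᵥ ((1 - D2) *ᵥ 1) := by rw [h1]
      _ = 1 := by rw [mulVec_mulVec, nonsing_inv_mul _ hdet, one_mulVec]
  -- The derivative of the total mass vanishes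
  have hzero : ∀ x : Fin m → ℝ,
      (1 : Fin m → ℝ) ⬝ᵥ (M *ᵥ (-((1 - D2)⁻¹ *ᵥ (D1 *ᵥ x)))) = 0 := by
    intro x
    have step1 : (1 : Fin m → ℝ) ⬝ᵥ (M *ᵥ ((1 - D2)⁻¹ *ᵥ (D1 *ᵥ x)))
        = (1 : Fin m → ℝ) ⬝ᵥ (M *ᵥ (D1 *ᵥ x)) := by
      rw [mulVec_mulVec, hkeyM, ← mulVec_mulVec, dotProduct_mulVec,
        vecMul_transpose, hinv1]
    have step2 : (1 : Fin m → ℝ) ⬝ᵥ (M *ᵥ (D1 *ᵥ x)) = 0 := by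
      have hMD1 : M * D1 = -(D1ᵀ * M) := eq_neg_of_add_eq_zero_left hD1
      rw [mulVec_mulVec, hMD1, neg_mulVec, dotProduct_neg, ← mulVec_mulVec,
        dotProduct_mulVec, vecMul_transpose, hD1cons, zero_dotProduct, neg_zero]
    rw [mulVec_neg, dotProduct_neg, step1, step2, neg_zero]
  -- conclude constancy
  have hf : ∀ t : ℝ, HasDerivAt (fun t => (1 : Fin m → ℝ) ⬝ᵥ (M *ᵥ u t)) 0 t := by
    intro t
    have hpi := hasDerivAt_pi.mp (hu t)
    have : HasDerivAt (fun t => ∑ i, (M *ᵥ u t) i)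
        (∑ i, (M *ᵥ (-((1 - D2)⁻¹ *ᵥ (D1 *ᵥ u t)))) i) t := by
      apply HasDerivAt.fun_sum
      intro i _
      simp only [mulVec, dotProduct]
      exact HasDerivAt.fun_sum fun j _ => (hpi j).const_mul (M i j)
    have heq : (fun t => (1 : Fin m → ℝ) ⬝ᵥ (M *ᵥ u t))
        = fun t => ∑ i, (M *ᵥ u t) i := by
      funext t; simp [dotProduct]
    rw [heq]
    convert this using 1
    rw [← hzero (u t)]
    simp [dotProduct]
  intro t₁ t₂
  exact is_const_of_deriv_eq_zero (fun t => (hf t).differentiableAt)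
    (fun t => (hf t).deriv) t₁ t₂
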